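/- arXiv:1509.00302 — 7 statements merged into one kernel-verified Lean document; each statement's English description precedes it below -/
import Mathlib

section
/- The matrix T constructed from T^+ and T^- satisfying skew detailed balance is a Markov transition matrix: all entries are nonnegative and all row sums equal 1. -/
open Finset

/-- The lifted matrix `T` constructed from `T⁺`, `T⁻` satisfying skew detailed balance
is a Markov transition matrix: all entries nonnegative, all row sums equal 1.
Here the direction `+1` is encoded by `true` and `-1` by `false`. -/
theorem lifted_matrix_is_stochastic
    {S : Type*} [Fintype S] [DecidableEq S]
    (π : S → ℝ) (hπpos : ∀ x, 0 < π x) (hπsum : ∑ x, π x = 1)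
    (Tp Tm : S → S → ℝ)
    (hTp_nn : ∀ x y, x ≠ y → 0 ≤ Tp x y) (hTm_nn : ∀ x y, x ≠ y → 0 ≤ Tm x y)
    (hTp_sub : ∀ x, ∑ y ∈ Finset.univ.erase x, Tp x y ≤ 1)
    (hTm_sub : ∀ x, ∑ y ∈ Finset.univ.erase x, Tm x y ≤ 1)
    (hskew : ∀ x y, x ≠ y → π x * Tp x y = π y * Tm y x)
    (Tmp Tpm : S → ℝ)
    (hTmp : ∀ x, Tmp x = max 0 (∑ y ∈ Finset.univ.erase x, (Tp x y - Tm x y)))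
    (hTpm : ∀ x, Tpm x = max 0 (∑ y ∈ Finset.univ.erase x, (Tm x y - Tp x y)))
    (hTp_diag : ∀ x, Tp x x = 1 - Tpm x - ∑ y ∈ Finset.univ.erase x, Tp x y)
    (hTm_diag : ∀ x, Tm x x = 1 - Tmp x - ∑ y ∈ Finset.univ.erase x, Tm x y)
    (T : S × Bool → S × Bool → ℝ)
    (hT_pp : ∀ x y, T (x, true) (y, true) = Tp x y)
    (hT_mm : ∀ x y, T (x, false) (y, false) = Tm x y)
    (hT_pm : ∀ x, T (x, true) (x, false) = Tpm x)
    (hT_mp : ∀ x, T (x, false) (x, true) = Tmp x)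
    (hT_pm0 : ∀ x y, x ≠ y → T (x, true) (y, false) = 0)
    (hT_mp0 : ∀ x y, x ≠ y → T (x, false) (y, true) = 0) :
    (∀ z w : S × Bool, 0 ≤ T z w) ∧ (∀ z : S × Bool, ∑ w : S × Bool, T z w = 1) := by

  -- key inequality: max 0 (t - s) + s ≤ 1 when s ≤ 1 and t ≤ 1
  have key : ∀ s t : ℝ, s ≤ 1 → t ≤ 1 → max 0 (t - s) + s ≤ 1 := by
    intro s t hs ht
    rcases le_total (t - s) 0 with h | h
    · rw [max_eq_left h]; linarith
    · rw [max_eq_right h]; linarith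
  have hTpm_nn : ∀ x, 0 ≤ Tpm x := fun x => (hTpm x) ▸ le_max_left _ _
  have hTmp_nn : ∀ x, 0 ≤ Tmp x := fun x => (hTmp x) ▸ le_max_left _ _
  have hTpm_bd : ∀ x, Tpm x + ∑ y ∈ Finset.univ.erase x, Tp x y ≤ 1 := by
    intro x
    rw [hTpm x, Finset.sum_sub_distrib]
    exact key _ _ (hTp_sub x) (hTm_sub x)
  have hTmp_bd : ∀ x, Tmp x + ∑ y ∈ Finset.univ.erase x, Tm x y ≤ 1 := by
    intro x
    rw [hTmp x, Finset.sum_sub_distrib]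
    exact key _ _ (hTm_sub x) (hTp_sub x)
  have hTp_diag_nn : ∀ x, 0 ≤ Tp x x := by
    intro x; rw [hTp_diag x]; have := hTpm_bd x; linarith
  have hTm_diag_nn : ∀ x, 0 ≤ Tm x x := by
    intro x; rw [hTm_diag x]; have := hTmp_bd x; linarith
  constructor
  · rintro ⟨x, b⟩ ⟨y, c⟩
    cases b <;> cases c <;> rcases eq_or_ne x y with rfl | hxy
    · rw [hT_mm]; exact hTm_diag_nn x
    · rw [hT_mm]; exact hTm_nn x y hxy
    · rw [hT_mp]; exact hTmp_nn x
    · rw [hT_mp0 x y hxy]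
    · rw [hT_pm]; exact hTpm_nn x
    · rw [hT_pm0 x y hxy]
    · rw [hT_pp]; exact hTp_diag_nn x
    · rw [hT_pp]; exact hTp_nn x y hxy
  · rintro ⟨x, b⟩
    rw [Fintype.sum_prod_type]
    have hoff : ∀ (f : S → S → ℝ) (g : S → ℝ), (∀ y, x ≠ y → f x y = 0) → f x x = g x →
        ∑ y, f x y = g x := by
      intro f g h0 hd
      rw [← Finset.sum_subset (Finset.subset_univ {x})]
      · simp [hd]
      · intro y _ hy
        exact h0 y (by simpa using (Ne.symm (by simpa using hy)))
    cases b
    · have h1 : ∑ y, (Tm x y) = Tm x x + ∑ y ∈ Finset.univ.erase x, Tm x y := by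
        rw [← Finset.add_sum_erase _ _ (Finset.mem_univ x)]
      calc ∑ y, ∑ c : Bool, T (x, false) (y, c)
          = ∑ y, (Tm x y + T (x, false) (y, true)) := by
            apply Finset.sum_congr rfl; intro y _
            simp [Fintype.sum_bool, hT_mm, add_comm]
        _ = (∑ y, Tm x y) + ∑ y, T (x, false) (y, true) := Finset.sum_add_distrib
        _ = (Tm x x + ∑ y ∈ Finset.univ.erase x, Tm x y) + Tmp x := by
            rw [h1, hoff (fun a y => T (a, false) (y, true)) Tmp
              (fun y hy => hT_mp0 x y hy) (hT_mp x)]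
        _ = 1 := by rw [hTm_diag x]; ring
    · have h1 : ∑ y, (Tp x y) = Tp x x + ∑ y ∈ Finset.univ.erase x, Tp x y := by
        rw [← Finset.add_sum_erase _ _ (Finset.mem_univ x)]
      calc ∑ y, ∑ c : Bool, T (x, true) (y, c)
          = ∑ y, (Tp x y + T (x, true) (y, false)) := by
            apply Finset.sum_congr rfl; intro y _
            simp [Fintype.sum_bool, hT_pp]
        _ = (∑ y, Tp x y) + ∑ y, T (x, true) (y, false) := Finset.sum_add_distrib
        _ = (Tp x x + ∑ y ∈ Finset.univ.erase x, Tp x y) + Tpm x := by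
            rw [h1, hoff (fun a y => T (a, true) (y, false)) Tpm
              (fun y hy => hT_pm0 x y hy) (hT_pm x)]
        _ = 1 := by rw [hTp_diag x]; ring
end

section
/- The lifted transition matrix T has invariant distribution (1/2)(π,π) on S×{-1,+1}; that is, for all (y,k) in S×{-1,+1}, ∑_{(x,j)} (1/2)π(x) T((x,j),(y,k)) = (1/2)π(y). -/
open Finset

open Finset

lemma lifted_aux {S : Type*} [Fintype S] [DecidableEq S]
    (π : S → ℝ) (Tp Tm : S → S → ℝ) (Tpm Tmp : S → ℝ)
    (hskew : ∀ x y, x ≠ y → π x * Tp x y = π y * Tm y x)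
    (hTmp : ∀ x, Tmp x = max 0 (∑ y ∈ Finset.univ.erase x, (Tp x y - Tm x y)))
    (hTpm : ∀ x, Tpm x = max 0 (∑ y ∈ Finset.univ.erase x, (Tm x y - Tp x y)))
    (hTp_diag : ∀ x, Tp x x = 1 - Tpm x - ∑ y ∈ Finset.univ.erase x, Tp x y)
    (y : S) :
    (∑ x, π x * Tp x y) + π y * Tmp y = π y := by
  rw [← Finset.sum_erase_add Finset.univ _ (Finset.mem_univ y)]
  have h1 : ∑ x ∈ Finset.univ.erase y, π x * Tp x y
      = π y * ∑ x ∈ Finset.univ.erase y, Tm y x := by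
    rw [Finset.mul_sum]
    exact Finset.sum_congr rfl fun x hx => hskew x y (Finset.ne_of_mem_erase hx)
  rw [h1, hTp_diag y, hTmp y, hTpm y, Finset.sum_sub_distrib, Finset.sum_sub_distrib]
  have h2 := max_zero_sub_max_neg_zero_eq_self
    ((∑ x ∈ Finset.univ.erase y, Tp y x) - ∑ x ∈ Finset.univ.erase y, Tm y x)
  rw [max_comm _ (0:ℝ), max_comm _ (0:ℝ), neg_sub] at h2
  linear_combination π y * h2


/-- The lifted matrix `T` has invariant distribution `(1/2)(π,π)` on `S × {-1,+1}`:
for every state `(y,k)`, `∑_{(x,j)} (1/2)π(x) T((x,j),(y,k)) = (1/2)π(y)`.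
Direction `+1` is encoded by `true` and `-1` by `false`. -/
theorem lifted_matrix_invariant
    {S : Type*} [Fintype S] [DecidableEq S]
    (π : S → ℝ) (hπpos : ∀ x, 0 < π x) (hπsum : ∑ x, π x = 1)
    (Tp Tm : S → S → ℝ)
    (hTp_nn : ∀ x y, x ≠ y → 0 ≤ Tp x y) (hTm_nn : ∀ x y, x ≠ y → 0 ≤ Tm x y)
    (hTp_sub : ∀ x, ∑ y ∈ Finset.univ.erase x, Tp x y ≤ 1)
    (hTm_sub : ∀ x, ∑ y ∈ Finset.univ.erase x, Tm x y ≤ 1)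
    (hskew : ∀ x y, x ≠ y → π x * Tp x y = π y * Tm y x)
    (Tmp Tpm : S → ℝ)
    (hTmp : ∀ x, Tmp x = max 0 (∑ y ∈ Finset.univ.erase x, (Tp x y - Tm x y)))
    (hTpm : ∀ x, Tpm x = max 0 (∑ y ∈ Finset.univ.erase x, (Tm x y - Tp x y)))
    (hTp_diag : ∀ x, Tp x x = 1 - Tpm x - ∑ y ∈ Finset.univ.erase x, Tp x y)
    (hTm_diag : ∀ x, Tm x x = 1 - Tmp x - ∑ y ∈ Finset.univ.erase x, Tm x y)
    (T : S × Bool → S × Bool → ℝ)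
    (hT_pp : ∀ x y, T (x, true) (y, true) = Tp x y)
    (hT_mm : ∀ x y, T (x, false) (y, false) = Tm x y)
    (hT_pm : ∀ x, T (x, true) (x, false) = Tpm x)
    (hT_mp : ∀ x, T (x, false) (x, true) = Tmp x)
    (hT_pm0 : ∀ x y, x ≠ y → T (x, true) (y, false) = 0)
    (hT_mp0 : ∀ x y, x ≠ y → T (x, false) (y, true) = 0) :
    ∀ w : S × Bool, ∑ z : S × Bool, (1 / 2 * π z.1) * T z w = 1 / 2 * π w.1 := by
  intro w
  obtain ⟨y, k⟩ := w
  rw [Fintype.sum_prod_type]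
  simp only [Fintype.sum_bool]
  cases k
  · -- k = false
    have hskew' : ∀ x y, x ≠ y → π x * Tm x y = π y * Tp y x :=
      fun x y h => (hskew y x h.symm).symm
    have key := lifted_aux π Tm Tp Tmp Tpm hskew' hTpm hTmp hTm_diag y
    have hA : ∑ x, (1 / 2 * π x * T (x, true) (y, false)) = 1 / 2 * (π y * Tpm y) := by
      rw [Finset.sum_eq_single y]
      · rw [hT_pm y]; ring
      · intro x _ hxy; rw [hT_pm0 x y hxy]; ring
      · intro h; exact absurd (Finset.mem_univ y) h
    have hB : ∑ x, (1 / 2 * π x * T (x, false) (y, false))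
        = 1 / 2 * ∑ x, π x * Tm x y := by
      rw [Finset.mul_sum]
      exact Finset.sum_congr rfl fun x _ => by rw [hT_mm x y]; ring
    rw [Finset.sum_add_distrib, hA, hB]
    linear_combination (1/2 : ℝ) * key
  · -- k = true
    have key := lifted_aux π Tp Tm Tpm Tmp hskew hTmp hTpm hTp_diag y
    have hA : ∑ x, (1 / 2 * π x * T (x, true) (y, true))
        = 1 / 2 * ∑ x, π x * Tp x y := by
      rw [Finset.mul_sum]
      exact Finset.sum_congr rfl fun x _ => by rw [hT_pp x y]; ring
    have hB : ∑ x, (1 / 2 * π x * T (x, false) (y, true)) = 1 / 2 * (π y * Tmp y) := by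
      rw [Finset.sum_eq_single y]
      · rw [hT_mp y]; ring
      · intro x _ hxy; rw [hT_mp0 x y hxy]; ring
      · intro h; exact absurd (Finset.mem_univ y) h
    rw [Finset.sum_add_distrib, hA, hB]
    linear_combination (1/2 : ℝ) * key
end

section
/- For 0 ≤ β < 1 and h ∈ ℝ, the function i(m) = -((1/2)βm² + βhm) + ((1-m)/2)log(1-m) + ((1+m)/2)log(1+m) on (-1,1) has a unique global minimizer m₀, and m₀ satisfies m₀ = tanh(β(m₀ + h)). -/
open Set Real

lemma cw_tanh_half_log (r : ℝ) (hr : 0 < r) :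
    Real.tanh (Real.log r / 2) = (r - 1) / (r + 1) := by
  have hsq : Real.exp (Real.log r / 2) ^ 2 = r := by
    rw [← Real.exp_nat_mul]
    push_cast
    rw [show (2:ℝ) * (Real.log r / 2) = Real.log r by ring, Real.exp_log hr]
  have hs : 0 < Real.exp (Real.log r / 2) := Real.exp_pos _
  rw [Real.tanh_eq_sinh_div_cosh, Real.sinh_eq, Real.cosh_eq, Real.exp_neg, ← hsq]
  field_simp
  rw [hsq, hsq]
  ring

lemma cw_hasDerivAt (β h : ℝ) (x : ℝ) (hx : x ∈ Ioo (-1:ℝ) 1) :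
    HasDerivAt (fun m => -((1/2)*β*m^2 + β*h*m) + ((1-m)/2)*Real.log (1-m)
        + ((1+m)/2)*Real.log (1+m))
      ((Real.log (1+x) - Real.log (1-x))/2 - β*(x+h)) x := by
  obtain ⟨hx1, hx2⟩ := hx
  have h1m : (0:ℝ) < 1 - x := by linarith
  have h1p : (0:ℝ) < 1 + x := by linarith
  have d1 : HasDerivAt (fun m : ℝ => -((1/2)*β*m^2 + β*h*m)) (-(β*x + β*h)) x := by
    have h' := (((hasDerivAt_pow 2 x).const_mul ((1:ℝ)/2*β)).add
      ((hasDerivAt_id x).const_mul (β*h))).neg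
    refine h'.congr_deriv ?_
    push_cast
    ring
  have d2 : HasDerivAt (fun m : ℝ => Real.log (1-m)) ((1-x)⁻¹ * (-1)) x :=
    (Real.hasDerivAt_log h1m.ne').comp x (((hasDerivAt_id x).const_sub 1))
  have d3 : HasDerivAt (fun m : ℝ => Real.log (1+m)) ((1+x)⁻¹ * 1) x :=
    (Real.hasDerivAt_log h1p.ne').comp x (((hasDerivAt_id x).const_add 1))
  have d4 : HasDerivAt (fun m : ℝ => ((1-m)/2)*Real.log (1-m))
      ((-1/2) * Real.log (1-x) + ((1-x)/2) * ((1-x)⁻¹ * (-1))) x := by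
    have h' := (((hasDerivAt_id x).const_sub 1).div_const 2).mul d2
    refine h'.congr_deriv ?_ <;> simp only [id] <;> ring
  have d5 : HasDerivAt (fun m : ℝ => ((1+m)/2)*Real.log (1+m))
      ((1/2) * Real.log (1+x) + ((1+x)/2) * ((1+x)⁻¹ * 1)) x := by
    have h' := (((hasDerivAt_id x).const_add 1).div_const 2).mul d3
    refine h'.congr_deriv ?_ <;> norm_num
  have h' := (d1.add d4).add d5
  refine h'.congr_deriv ?_
  field_simp
  ring

/-- The point with artanh equal to `c`, as an explicit formula. -/
lemma cw_point (c : ℝ) :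
    (Real.exp (2*c) - 1) / (Real.exp (2*c) + 1) ∈ Ioo (-1:ℝ) 1 ∧
    (Real.log (1 + (Real.exp (2*c) - 1) / (Real.exp (2*c) + 1))
      - Real.log (1 - (Real.exp (2*c) - 1) / (Real.exp (2*c) + 1))) / 2 = c := by
  set r := Real.exp (2*c) with hr
  have hr0 : 0 < r := Real.exp_pos _
  have hr1 : 0 < r + 1 := by linarith
  have hmem : (r - 1) / (r + 1) ∈ Ioo (-1:ℝ) 1 := by
    constructor
    · rw [lt_div_iff₀ hr1]; linarith
    · rw [div_lt_one hr1]; linarith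
  refine ⟨hmem, ?_⟩
  have e1 : 1 + (r - 1) / (r + 1) = 2*r/(r+1) := by
    field_simp
    ring
  have e2 : 1 - (r - 1) / (r + 1) = 2/(r+1) := by
    field_simp
    norm_num
  rw [e1, e2, ← Real.log_div (by positivity) (by positivity)]
  rw [show 2*r/(r+1) / (2/(r+1)) = r by field_simp, hr, Real.log_exp]
  ring

/-- For `0 ≤ β < 1` and `h ∈ ℝ`, the Curie-Weiss rate function
`i(m) = -((1/2)βm² + βhm) + ((1-m)/2)log(1-m) + ((1+m)/2)log(1+m)` on `(-1,1)`
has a unique global minimizer `m₀`, which satisfies `m₀ = tanh(β(m₀+h))`. -/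
theorem curie_weiss_unique_minimizer
    (β h : ℝ) (hβ0 : 0 ≤ β) (hβ1 : β < 1)
    (i : ℝ → ℝ)
    (hi : ∀ m ∈ Ioo (-1 : ℝ) 1,
      i m = -((1 / 2) * β * m ^ 2 + β * h * m)
        + ((1 - m) / 2) * Real.log (1 - m) + ((1 + m) / 2) * Real.log (1 + m)) :
    ∃ m₀ ∈ Ioo (-1 : ℝ) 1,
      (∀ m ∈ Ioo (-1 : ℝ) 1, m ≠ m₀ → i m₀ < i m) ∧
      m₀ = Real.tanh (β * (m₀ + h)) := by
  set g : ℝ → ℝ := fun m => -((1/2)*β*m^2 + β*h*m) + ((1-m)/2)*Real.log (1-m)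
      + ((1+m)/2)*Real.log (1+m) with hg
  set g' : ℝ → ℝ := fun m => (Real.log (1+m) - Real.log (1-m))/2 - β*(m+h) with hg'def
  have hg' : ∀ x ∈ Ioo (-1:ℝ) 1, HasDerivAt g (g' x) x := fun x hx =>
    cw_hasDerivAt β h x hx
  -- g' is strictly monotone on Ioo (-1) 1
  have hg'' : ∀ x ∈ Ioo (-1:ℝ) 1,
      HasDerivAt g' (1/(2*(1+x)) + 1/(2*(1-x)) - β) x := by
    intro x hx
    obtain ⟨hx1, hx2⟩ := hx
    have h1m : (0:ℝ) < 1 - x := by linarith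
    have h1p : (0:ℝ) < 1 + x := by linarith
    have d3 : HasDerivAt (fun m : ℝ => Real.log (1+m)) ((1+x)⁻¹ * 1) x :=
      (Real.hasDerivAt_log h1p.ne').comp x (((hasDerivAt_id x).const_add 1))
    have d2 : HasDerivAt (fun m : ℝ => Real.log (1-m)) ((1-x)⁻¹ * (-1)) x :=
      (Real.hasDerivAt_log h1m.ne').comp x (((hasDerivAt_id x).const_sub 1))
    have h' := ((d3.sub d2).div_const 2).sub
      (((hasDerivAt_id x).add_const h).const_mul β)
    refine h'.congr_deriv ?_
    field_simp
    ring
  have hpos : ∀ x ∈ Ioo (-1:ℝ) 1, 0 < 1/(2*(1+x)) + 1/(2*(1-x)) - β := by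
    intro x hx
    obtain ⟨hx1, hx2⟩ := hx
    have h1m : (0:ℝ) < 1 - x := by linarith
    have h1p : (0:ℝ) < 1 + x := by linarith
    have hne : (1:ℝ) - x^2 ≠ 0 := by nlinarith
    have key : 1/(2*(1+x)) + 1/(2*(1-x)) = 1/(1-x^2) := by
      field_simp
      ring
    have hle : 1 - x^2 ≤ 1 := by nlinarith
    have hpos2 : 0 < 1 - x^2 := by nlinarith
    have : (1:ℝ) ≤ 1/(1-x^2) := by
      rw [le_div_iff₀ hpos2]; linarith
    rw [key]; linarith
  have hmono : StrictMonoOn g' (Ioo (-1:ℝ) 1) := by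
    apply strictMonoOn_of_deriv_pos (convex_Ioo _ _)
    · exact fun x hx => (hg'' x hx).continuousAt.continuousWithinAt
    · intro x hx
      rw [interior_Ioo] at hx
      rw [(hg'' x hx).deriv]
      exact hpos x hx
  -- find zero of g' by IVT
  set c : ℝ := β*(1+|h|) + 1 with hc
  have hc0 : 0 < c := by positivity
  obtain ⟨hmema, hvala⟩ := cw_point (-c)
  obtain ⟨hmemb, hvalb⟩ := cw_point c
  set a : ℝ := (Real.exp (2*(-c)) - 1) / (Real.exp (2*(-c)) + 1) with ha
  set b : ℝ := (Real.exp (2*c) - 1) / (Real.exp (2*c) + 1) with hb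
  have hane : a < 0 := by
    rw [ha, div_neg_iff]
    right
    constructor
    · have : Real.exp (2*(-c)) < Real.exp 0 := Real.exp_lt_exp.mpr (by linarith)
      rw [Real.exp_zero] at this
      linarith
    · have := Real.exp_pos (2*(-c)); linarith
  have hbpos : 0 < b := by
    rw [hb, div_pos_iff]
    left
    constructor
    · have : Real.exp 0 < Real.exp (2*c) := Real.exp_lt_exp.mpr (by linarith)
      rw [Real.exp_zero] at this
      linarith
    · have := Real.exp_pos (2*c); linarith
  have hab : a ≤ b := by linarith
  have hga : g' a ≤ 0 := by
    rw [hg'def]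
    simp only
    rw [hvala]
    have h1 : -(1+|h|) ≤ a + h := by
      have := neg_abs_le h; obtain ⟨q1, q2⟩ := hmema; linarith
    have h2 : -β*(a+h) ≤ β*(1+|h|) := by nlinarith
    linarith
  have hgb : 0 ≤ g' b := by
    rw [hg'def]
    simp only
    rw [hvalb]
    have h1 : b + h ≤ 1+|h| := by
      have := le_abs_self h; obtain ⟨q1, q2⟩ := hmemb; linarith
    have h2 : β*(b+h) ≤ β*(1+|h|) := by nlinarith
    linarith
  have hIcc : Icc a b ⊆ Ioo (-1:ℝ) 1 := by
    intro x hx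
    obtain ⟨q1, q2⟩ := hx
    exact ⟨lt_of_lt_of_le hmema.1 q1, lt_of_le_of_lt q2 hmemb.2⟩
  have hcont : ContinuousOn g' (Icc a b) := fun x hx =>
    (hg'' x (hIcc hx)).continuousAt.continuousWithinAt
  have hivt := intermediate_value_Icc hab hcont
  have h0mem : (0:ℝ) ∈ Icc (g' a) (g' b) := ⟨hga, hgb⟩
  obtain ⟨m₀, hm₀mem, hm₀zero⟩ := hivt h0mem
  have hm₀I : m₀ ∈ Ioo (-1:ℝ) 1 := hIcc hm₀mem
  obtain ⟨hm₀1, hm₀2⟩ := hm₀I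
  have h1m : (0:ℝ) < 1 - m₀ := by linarith
  have h1p : (0:ℝ) < 1 + m₀ := by linarith
  -- the tanh equation
  have hkey : β*(m₀+h) = Real.log ((1+m₀)/(1-m₀)) / 2 := by
    have : (Real.log (1+m₀) - Real.log (1-m₀))/2 - β*(m₀+h) = 0 := hm₀zero
    rw [Real.log_div h1p.ne' h1m.ne']
    linarith
  have htanh : m₀ = Real.tanh (β * (m₀ + h)) := by
    rw [hkey, cw_tanh_half_log _ (by positivity)]
    field_simp
    ring
  refine ⟨m₀, ⟨hm₀1, hm₀2⟩, ?_, htanh⟩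
  -- strict minimality
  have hg'm₀ : g' m₀ = 0 := hm₀zero
  have hgval : ∀ m ∈ Ioo (-1:ℝ) 1, i m = g m := fun m hm => hi m hm
  intro m hm hne
  rw [hgval m hm, hgval m₀ ⟨hm₀1, hm₀2⟩]
  obtain ⟨hm1, hm2⟩ := hm
  rcases lt_or_gt_of_ne hne with hlt | hgt
  · -- m < m₀ : g strictly decreasing on [m, m₀]
    have hsub : Icc m m₀ ⊆ Ioo (-1:ℝ) 1 := fun x hx =>
      ⟨lt_of_lt_of_le hm1 hx.1, lt_of_le_of_lt hx.2 hm₀2⟩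
    have hanti : StrictAntiOn g (Icc m m₀) := by
      apply strictAntiOn_of_deriv_neg (convex_Icc _ _)
      · exact fun x hx => (hg' x (hsub hx)).continuousAt.continuousWithinAt
      · intro x hx
        rw [interior_Icc] at hx
        have hxI : x ∈ Ioo (-1:ℝ) 1 := hsub ⟨le_of_lt hx.1, le_of_lt hx.2⟩
        rw [(hg' x hxI).deriv]
        have := hmono hxI ⟨hm₀1, hm₀2⟩ hx.2
        linarith [hg'm₀]
    have := hanti (left_mem_Icc.mpr hlt.le) (right_mem_Icc.mpr hlt.le) hlt
    linarith
  · -- m₀ < m : g strictly increasing on [m₀, m]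
    have hsub : Icc m₀ m ⊆ Ioo (-1:ℝ) 1 := fun x hx =>
      ⟨lt_of_lt_of_le hm₀1 hx.1, lt_of_le_of_lt hx.2 hm2⟩
    have hmono2 : StrictMonoOn g (Icc m₀ m) := by
      apply strictMonoOn_of_deriv_pos (convex_Icc _ _)
      · exact fun x hx => (hg' x (hsub hx)).continuousAt.continuousWithinAt
      · intro x hx
        rw [interior_Icc] at hx
        have hxI : x ∈ Ioo (-1:ℝ) 1 := hsub ⟨le_of_lt hx.1, le_of_lt hx.2⟩
        rw [(hg' x hxI).deriv]
        have := hmono ⟨hm₀1, hm₀2⟩ hxI hx.1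
        linarith [hg'm₀]
    have := hmono2 (left_mem_Icc.mpr hgt.le) (right_mem_Icc.mpr hgt.le) hgt
    linarith
end

section
/- Suppose there is y₀ > 0 such that inf_{y≥y₀} λ^+(y) > sup_{y≥y₀} λ^-(y) and inf_{y≤-y₀} λ^-(y) > sup_{y≤-y₀} λ^+(y). Then with Ψ(y) = (1/a)∫₀^y (λ^+(η) - λ^-(η)) dη, the measure with density y ↦ exp(-Ψ(y)) with respect to Lebesgue measure on ℝ is finite: ∫_ℝ exp(-Ψ(y)) dy < ∞. -/
open Set Real MeasureTheory

lemma exp_mul_integrableOn_Iic (c : ℝ) {b : ℝ} (hb : 0 < b) :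
    IntegrableOn (fun x => Real.exp (b * x)) (Iic c) := by
  have h : IntegrableOn (fun x => Real.exp (-b * x)) (Ici (-c)) := by
    rw [integrableOn_Ici_iff_integrableOn_Ioi]
    exact exp_neg_integrableOn_Ioi (-c) hb
  have hmap : Measure.map Neg.neg (volume.restrict (Iic c)) =
      volume.restrict (Ici (-c)) := by
    have : Iic c = Neg.neg ⁻¹' (Ici (-c)) := by ext x; simp
    rw [this]
    exact ((Measure.measurePreserving_neg (volume : Measure ℝ)).restrict_preimage
      measurableSet_Ici).map_eq
  have h2 : Integrable ((fun x => Real.exp (-b * x)) ∘ Neg.neg)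
      (volume.restrict (Iic c)) := by
    rw [← (measurableEmbedding_neg (α := ℝ)).integrable_map_iff, hmap]
    exact h
  have h3 : Integrable (fun x => Real.exp (b * x)) (volume.restrict (Iic c)) := by
    simpa [Function.comp_def, mul_comm] using h2
  exact h3

/-- Suppose there is `y₀ > 0` with `inf_{y≥y₀} λ⁺(y) > sup_{y≥y₀} λ⁻(y)` and
`inf_{y≤-y₀} λ⁻(y) > sup_{y≤-y₀} λ⁺(y)` (encoded by separating constants
`c₁ < c₂`).  Then with `Ψ(y) = (1/a)∫₀ʸ (λ⁺(η) - λ⁻(η)) dη`, the measure with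
density `y ↦ exp(-Ψ(y))` with respect to Lebesgue measure is finite, i.e.
`y ↦ exp(-Ψ(y))` is integrable on `ℝ`. -/
theorem zigzag_invariant_measure_finite
    (a : ℝ) (ha : 0 < a)
    (lamp lamm : ℝ → ℝ)
    (hcontp : Continuous lamp) (hcontm : Continuous lamm)
    (hnnp : ∀ y, 0 ≤ lamp y) (hnnm : ∀ y, 0 ≤ lamm y)
    (y₀ : ℝ) (hy₀ : 0 < y₀)
    (hplus : ∃ c₁ c₂ : ℝ, c₁ < c₂ ∧ (∀ y, y₀ ≤ y → lamm y ≤ c₁) ∧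
      (∀ y, y₀ ≤ y → c₂ ≤ lamp y))
    (hminus : ∃ c₁ c₂ : ℝ, c₁ < c₂ ∧ (∀ y, y ≤ -y₀ → lamp y ≤ c₁) ∧
      (∀ y, y ≤ -y₀ → c₂ ≤ lamm y))
    (Ψ : ℝ → ℝ)
    (hΨ : ∀ y, Ψ y = (1 / a) * ∫ η in (0 : ℝ)..y, (lamp η - lamm η)) :
    Integrable (fun y => Real.exp (-Ψ y)) (volume : Measure ℝ) := by
  obtain ⟨c₁, c₂, hc, hmle, hple⟩ := hplus
  obtain ⟨d₁, d₂, hd, hple', hmle'⟩ := hminus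
  set f : ℝ → ℝ := fun η => lamp η - lamm η with hf
  have hcf : Continuous f := hcontp.sub hcontm
  have hint : ∀ u v : ℝ, IntervalIntegrable f volume u v :=
    fun u v => hcf.intervalIntegrable u v
  have hΨeq : Ψ = fun y => (1 / a) * ∫ η in (0 : ℝ)..y, f η := funext hΨ
  have hΨcont : Continuous Ψ := by
    rw [hΨeq]
    exact continuous_const.mul (intervalIntegral.continuous_primitive hint 0)
  have hcontexp : Continuous fun y => Real.exp (-Ψ y) := hΨcont.neg.rexp
  set k : ℝ := (c₂ - c₁) / a with hk
  have hkpos : 0 < k := div_pos (sub_pos.2 hc) ha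
  set k' : ℝ := (d₂ - d₁) / a with hk'
  have hk'pos : 0 < k' := div_pos (sub_pos.2 hd) ha
  -- bound on the right
  have hbound_r : ∀ y, y₀ ≤ y →
      Real.exp (-Ψ y) ≤ Real.exp (-Ψ y₀ + k * y₀) * Real.exp (-k * y) := by
    intro y hy
    rw [← Real.exp_add]
    apply Real.exp_le_exp.2
    have hsplit : Ψ y = Ψ y₀ + (1 / a) * ∫ η in y₀..y, f η := by
      rw [hΨ y, hΨ y₀, ← mul_add,
        intervalIntegral.integral_add_adjacent_intervals (hint 0 y₀) (hint y₀ y)]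
    have hmono : (c₂ - c₁) * (y - y₀) ≤ ∫ η in y₀..y, f η := by
      have : ∫ η in y₀..y, (c₂ - c₁) ≤ ∫ η in y₀..y, f η := by
        apply intervalIntegral.integral_mono_on hy (intervalIntegrable_const) (hint y₀ y)
        intro η hη
        have hη' : y₀ ≤ η := hη.1
        have := hple η hη'
        have := hmle η hη'
        simp only [hf]
        linarith
      rwa [intervalIntegral.integral_const, smul_eq_mul, mul_comm] at this
    have hΨge : Ψ y₀ + k * (y - y₀) ≤ Ψ y := by
      rw [hsplit, hk]
      have h1 : (1 / a) * ((c₂ - c₁) * (y - y₀)) ≤ (1 / a) * ∫ η in y₀..y, f η :=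
        mul_le_mul_of_nonneg_left hmono (by positivity)
      have : (c₂ - c₁) / a * (y - y₀) = (1 / a) * ((c₂ - c₁) * (y - y₀)) := by ring
      linarith [h1, this ▸ le_refl ((c₂ - c₁) / a * (y - y₀))]
    linarith
  -- bound on the left
  have hbound_l : ∀ y, y ≤ -y₀ →
      Real.exp (-Ψ y) ≤ Real.exp (-Ψ (-y₀) + k' * y₀) * Real.exp (k' * y) := by
    intro y hy
    rw [← Real.exp_add]
    apply Real.exp_le_exp.2
    have hsplit : Ψ y = Ψ (-y₀) + (1 / a) * ∫ η in (-y₀)..y, f η := by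
      rw [hΨ y, hΨ (-y₀), ← mul_add,
        intervalIntegral.integral_add_adjacent_intervals (hint 0 (-y₀)) (hint (-y₀) y)]
    have hmono : ∫ η in y..(-y₀), f η ≤ (d₁ - d₂) * (-y₀ - y) := by
      have : ∫ η in y..(-y₀), f η ≤ ∫ η in y..(-y₀), (d₁ - d₂) := by
        apply intervalIntegral.integral_mono_on hy (hint y (-y₀)) intervalIntegrable_const
        intro η hη
        have hη' : η ≤ -y₀ := hη.2
        have := hple' η hη'
        have := hmle' η hη'
        simp only [hf]
        linarith
      rwa [intervalIntegral.integral_const, smul_eq_mul, mul_comm] at this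
    have hrev : (d₂ - d₁) * (-y₀ - y) ≤ ∫ η in (-y₀)..y, f η := by
      rw [intervalIntegral.integral_symm]
      linarith
    have hΨge : Ψ (-y₀) + k' * (-y₀ - y) ≤ Ψ y := by
      rw [hsplit, hk']
      have h1 : (1 / a) * ((d₂ - d₁) * (-y₀ - y)) ≤ (1 / a) * ∫ η in (-y₀)..y, f η :=
        mul_le_mul_of_nonneg_left hrev (by positivity)
      have h2 : (d₂ - d₁) / a * (-y₀ - y) = (1 / a) * ((d₂ - d₁) * (-y₀ - y)) := by ring
      linarith [h2 ▸ h1]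
    linarith
  -- integrability pieces
  have hIoi : IntegrableOn (fun y => Real.exp (-Ψ y)) (Ioi y₀) := by
    apply Integrable.mono' (g := fun y => Real.exp (-Ψ y₀ + k * y₀) * Real.exp (-k * y))
      ((exp_neg_integrableOn_Ioi y₀ hkpos).const_mul _)
      hcontexp.aestronglyMeasurable.restrict
    filter_upwards [ae_restrict_mem measurableSet_Ioi] with y hy
    rw [Real.norm_eq_abs, abs_of_pos (Real.exp_pos _)]
    exact hbound_r y (le_of_lt hy)
  have hIic : IntegrableOn (fun y => Real.exp (-Ψ y)) (Iic (-y₀)) := by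
    apply Integrable.mono' (g := fun y => Real.exp (-Ψ (-y₀) + k' * y₀) * Real.exp (k' * y))
      ((exp_mul_integrableOn_Iic (-y₀) hk'pos).const_mul _)
      hcontexp.aestronglyMeasurable.restrict
    filter_upwards [ae_restrict_mem measurableSet_Iic] with y hy
    rw [Real.norm_eq_abs, abs_of_pos (Real.exp_pos _)]
    exact hbound_l y hy
  have hIcc : IntegrableOn (fun y => Real.exp (-Ψ y)) (Icc (-y₀) y₀) :=
    hcontexp.integrableOn_Icc
  rw [← integrableOn_univ]
  have hcover : (univ : Set ℝ) ⊆ (Iic (-y₀) ∪ Icc (-y₀) y₀) ∪ Ioi y₀ := by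
    intro x _
    rcases le_or_gt x y₀ with h | h
    · rcases le_or_gt x (-y₀) with h' | h'
      · exact Or.inl (Or.inl h')
      · exact Or.inl (Or.inr ⟨le_of_lt h', h⟩)
    · exact Or.inr h
  exact ((hIic.union hIcc).union hIoi).mono_set hcover
end

section
/- For any measure μ on ℝ × {-1,+1} with density (y,j) ↦ exp(-Ψ(y)) with respect to Leb ⊗ (δ_{-1}+δ_{+1}), where Ψ is C¹, bounded below, and satisfies aΨ'(y) = λ^+(y) - λ^-(y), and for any φ: ℝ×{-1,+1} → ℝ with φ(·,±1) ∈ C¹ vanishing at infinity along with the stated combination, one has ∑_{j=±1} ∫_ℝ [a j ∂φ/∂y(y,j) + λ(y,j)(φ(y,-j) - φ(y,j))] exp(-Ψ(y)) dy = 0. -/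
open Set Real MeasureTheory Filter

/-- For a measure with density `exp(-Ψ)` (Ψ being `C¹`, bounded below, satisfying
`aΨ' = λ⁺ - λ⁻`) with respect to `Leb ⊗ (δ₋₁ + δ₊₁)`, and any `φ` with
`φ(·,±1) ∈ C¹` vanishing at infinity (with the relevant integrability), the
integral of the zig-zag generator vanishes:
`∑_{j=±1} ∫ [a j ∂φ/∂y(y,j) + λ(y,j)(φ(y,-j)-φ(y,j))] e^{-Ψ(y)} dy = 0`. -/
theorem zigzag_generator_integral_zero
    (a : ℝ) (ha : 0 < a)
    (lamp lamm : ℝ → ℝ)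
    (hcontp : Continuous lamp) (hcontm : Continuous lamm)
    (hnnp : ∀ y, 0 ≤ lamp y) (hnnm : ∀ y, 0 ≤ lamm y)
    (Ψ : ℝ → ℝ) (hΨdiff : ContDiff ℝ 1 Ψ)
    (hΨbdd : ∃ C : ℝ, ∀ y, C ≤ Ψ y)
    (hΨ' : ∀ y, a * deriv Ψ y = lamp y - lamm y)
    (phip phim : ℝ → ℝ)
    (hphip : ContDiff ℝ 1 phip) (hphim : ContDiff ℝ 1 phim)
    (hphip0 : Tendsto phip (cocompact ℝ) (nhds 0))
    (hphim0 : Tendsto phim (cocompact ℝ) (nhds 0))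
    (hint_p : Integrable (fun y =>
      (a * deriv phip y + lamp y * (phim y - phip y)) * Real.exp (-Ψ y)) volume)
    (hint_m : Integrable (fun y =>
      (a * (-1) * deriv phim y + lamm y * (phip y - phim y)) * Real.exp (-Ψ y)) volume)
    (hint_dp : Integrable (fun y => deriv phip y * Real.exp (-Ψ y)) volume)
    (hint_dm : Integrable (fun y => deriv phim y * Real.exp (-Ψ y)) volume)
    (hint_lpp : Integrable (fun y => lamp y * phip y * Real.exp (-Ψ y)) volume)
    (hint_lpm : Integrable (fun y => lamp y * phim y * Real.exp (-Ψ y)) volume)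
    (hint_lmp : Integrable (fun y => lamm y * phip y * Real.exp (-Ψ y)) volume)
    (hint_lmm : Integrable (fun y => lamm y * phim y * Real.exp (-Ψ y)) volume) :
    (∫ y, (a * deriv phip y + lamp y * (phim y - phip y)) * Real.exp (-Ψ y)) +
    (∫ y, (a * (-1) * deriv phim y + lamm y * (phip y - phim y)) * Real.exp (-Ψ y))
      = 0 := by
  
  set F : ℝ → ℝ := fun y => a * ((phip y - phim y) * Real.exp (-Ψ y)) with hF
  set G : ℝ → ℝ := fun y =>
      (a * deriv phip y + lamp y * (phim y - phip y)) * Real.exp (-Ψ y) +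
      (a * (-1) * deriv phim y + lamm y * (phip y - phim y)) * Real.exp (-Ψ y) with hG
  have hGint : Integrable G := hint_p.add hint_m
  -- derivative
  have hderiv : ∀ y, HasDerivAt F (G y) y := by
    intro y
    have hΨd : HasDerivAt Ψ (deriv Ψ y) y :=
      (hΨdiff.differentiable one_ne_zero y).hasDerivAt
    have hpd : HasDerivAt phip (deriv phip y) y :=
      (hphip.differentiable one_ne_zero y).hasDerivAt
    have hmd : HasDerivAt phim (deriv phim y) y :=
      (hphim.differentiable one_ne_zero y).hasDerivAt
    have he : HasDerivAt (fun y => Real.exp (-Ψ y)) (-deriv Ψ y * Real.exp (-Ψ y)) y := by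
      have := (hΨd.neg).exp
      simpa [mul_comm] using this
    have h1 : HasDerivAt (fun y => (phip y - phim y) * Real.exp (-Ψ y))
        ((deriv phip y - deriv phim y) * Real.exp (-Ψ y) +
          (phip y - phim y) * (-deriv Ψ y * Real.exp (-Ψ y))) y := (hpd.sub hmd).mul he
    have h2 := h1.const_mul a
    refine h2.congr_deriv ?_
    have hy := hΨ' y
    simp only [hG]
    linear_combination -(phip y - phim y) * Real.exp (-Ψ y) * hy
  -- F tends to 0 at cocompact
  obtain ⟨C, hC⟩ := hΨbdd
  have hFtend : Tendsto F (cocompact ℝ) (nhds 0) := by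
    have hbd : ∀ y, |F y| ≤ (a * Real.exp (-C)) * |phip y - phim y| := by
      intro y
      have h1 : Real.exp (-Ψ y) ≤ Real.exp (-C) := Real.exp_le_exp.2 (by linarith [hC y])
      have h2 : (0:ℝ) < Real.exp (-Ψ y) := Real.exp_pos _
      rw [hF]
      rw [abs_mul, abs_mul, abs_of_pos ha, abs_of_pos h2]
      calc a * (|phip y - phim y| * Real.exp (-Ψ y))
          ≤ a * (|phip y - phim y| * Real.exp (-C)) := by
            apply mul_le_mul_of_nonneg_left _ ha.le
            exact mul_le_mul_of_nonneg_left h1 (abs_nonneg _)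
        _ = a * Real.exp (-C) * |phip y - phim y| := by ring
    have hs : Tendsto (fun y => (a * Real.exp (-C)) * |phip y - phim y|)
        (cocompact ℝ) (nhds 0) := by
      have := ((hphip0.sub hphim0).abs).const_mul (a * Real.exp (-C))
      simpa using this
    refine squeeze_zero_norm (fun y => ?_) hs
    simpa [Real.norm_eq_abs] using hbd y
  have hFcont : Continuous F := by
    exact (continuous_const.mul (((hphip.continuous).sub (hphim.continuous)).mul
      (Real.continuous_exp.comp (hΨdiff.continuous.neg))))
  have htop : Tendsto F atTop (nhds 0) :=
    hFtend.mono_left (by rw [cocompact_eq_atBot_atTop]; exact le_sup_right)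
  have hbot : Tendsto F atBot (nhds 0) :=
    hFtend.mono_left (by rw [cocompact_eq_atBot_atTop]; exact le_sup_left)
  have hIic : ∫ y in Iic (0:ℝ), G y = F 0 - 0 :=
    integral_Iic_of_hasDerivAt_of_tendsto hFcont.continuousWithinAt
      (fun x _ => hderiv x) hGint.integrableOn hbot
  have hIoi : ∫ y in Ioi (0:ℝ), G y = 0 - F 0 :=
    integral_Ioi_of_hasDerivAt_of_tendsto hFcont.continuousWithinAt
      (fun x _ => hderiv x) hGint.integrableOn htop
  rw [← integral_add hint_p hint_m]
  rw [← intervalIntegral.integral_Iic_add_Ioi (b := (0:ℝ)) hGint.integrableOn hGint.integrableOn]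
  rw [hIic, hIoi]; ring
end

section
/- The zig-zag semigroup is not strong Feller: with j = +1, t > 0, A = [y + at, ∞), and φ = 1_A(·) (independent of the direction component), the function z ↦ P(t)φ(z,+1) = P_{z,+1}(Y(t) ∈ A) is discontinuous at z = y, since P_{y,+1}(Y(t) ∈ A) ≥ P_{y,+1}(T₁ > t) > 0 while P_{z,+1}(Y(t) ∈ A) = 0 for all z < y. -/
open Set Real MeasureTheory

/-- The zig-zag semigroup is not strong Feller: with direction `+1`, `t > 0` and
`A = [y + at, ∞)`, `φ = 1_A`, the map `z ↦ P(t)φ(z,+1) = P_{z,+1}(Y(t) ∈ A)` is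
positive at `z = y` (since `P_{y,+1}(T₁ > t) > 0`), vanishes for `z < y`
(since `|Y(t) - z| ≤ at`), and hence is discontinuous at `z = y`.
Here `ν z` is the law of the process started at `(z,+1)`, `Yt z` the position at
time `t` and `T₁ z` the first switching time. -/
theorem zigzag_not_strong_feller
    {Ω : Type*} [MeasurableSpace Ω]
    (ν : ℝ → Measure Ω) (hprob : ∀ z, IsProbabilityMeasure (ν z))
    (a t y : ℝ) (ha : 0 < a) (ht : 0 < t)
    (Yt : ℝ → Ω → ℝ) (T₁ : ℝ → Ω → ℝ)
    (hspeed : ∀ z ω, |Yt z ω - z| ≤ a * t)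
    (hlinear : ∀ z ω, t < T₁ z ω → Yt z ω = z + a * t)
    (hpos : ∀ z, 0 < ν z {ω | t < T₁ z ω}) :
    0 < ν y {ω | y + a * t ≤ Yt y ω} ∧
    (∀ z, z < y → ν z {ω | y + a * t ≤ Yt z ω} = 0) ∧
    ¬ ContinuousAt (fun z => (ν z {ω | y + a * t ≤ Yt z ω}).toReal) y := by
  have hposy : 0 < ν y {ω | y + a * t ≤ Yt y ω} := by
    refine lt_of_lt_of_le (hpos y) (measure_mono ?_)
    intro ω hω
    simp only [Set.mem_setOf_eq] at *
    rw [hlinear y ω hω]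
  have hzero : ∀ z, z < y → ν z {ω | y + a * t ≤ Yt z ω} = 0 := by
    intro z hz
    convert measure_empty
    · ext ω
      simp only [Set.mem_setOf_eq, Set.mem_empty_iff_false, iff_false, not_le]
      have := hspeed z ω
      have h1 : Yt z ω ≤ z + a * t := by
        have := abs_le.mp this
        linarith [this.2]
      linarith
    · infer_instance
  refine ⟨hposy, hzero, ?_⟩
  intro hcont
  have hfin : ν y {ω | y + a * t ≤ Yt y ω} ≠ ⊤ := by
    have := hprob y
    exact (measure_lt_top _ _).ne
  have hfy : 0 < (ν y {ω | y + a * t ≤ Yt y ω}).toReal :=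
    ENNReal.toReal_pos hposy.ne' hfin
  have hev : ∀ᶠ z in nhds y,
      0 < (ν z {ω | y + a * t ≤ Yt z ω}).toReal :=
    hcont.eventually (eventually_gt_nhds hfy)
  have hbot : (nhds y ⊓ Filter.principal (Set.Iio y)).NeBot :=
    by simpa [nhdsWithin] using (nhdsLT_neBot y)
  have : ∀ᶠ z in nhds y ⊓ Filter.principal (Set.Iio y),
      0 < (ν z {ω | y + a * t ≤ Yt z ω}).toReal :=
    hev.filter_mono inf_le_left
  have hzero' : ∀ᶠ z in nhds y ⊓ Filter.principal (Set.Iio y),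
      (ν z {ω | y + a * t ≤ Yt z ω}).toReal = 0 := by
    filter_upwards [Filter.eventually_inf_principal.mpr
      (Filter.Eventually.of_forall (fun z (hz : z < y) => hzero z hz))] with z hz
    simp [hz]
  rcases (this.and hzero').exists with ⟨z, h1, h2⟩
  rw [h2] at h1
  exact lt_irrefl _ h1
end

section
/- Under the assumption that there is y₀ > 0 with M⁺ := inf_{y≥y₀}λ⁺(y) > m⁺ := sup_{y≥y₀}λ⁻(y) and M⁻ := inf_{y≤-y₀}λ⁻(y) > m⁻ := sup_{y≤-y₀}λ⁺(y), there exist constants β⁺, β⁻ > 0 and α⁺, α⁻ > 0 such that α⁺ ∈ (m⁺(e^{2β⁺}-1), M⁺(1-e^{-2β⁺})) and α⁻ ∈ (m⁻(e^{2β⁻}-1), M⁻(1-e^{-2β⁻})); consequently, with V(y,+1) = exp(α⁺y + β⁺) and V(y,-1) = exp(α⁺y - β⁺) for y ≥ y₀, the generator L of the zig-zag process with unit speed satisfies LV(y,+1) = (α⁺ - λ⁺(y)(1 - e^{-2β⁺}))V(y,+1) < -c⁺V(y,+1) and LV(y,-1) = (-α⁺ + λ⁻(y)(e^{2β⁺}-1))V(y,-1)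 < -c⁺V(y,-1) for some c⁺ > 0 and all y ≥ y₀. -/
open Set Real

/-- Auxiliary: for `0 ≤ m < M` there are `β, α > 0` with
`α ∈ (m(e^{2β}-1), M(1-e^{-2β}))`. -/
lemma zigzag_aux (m M : ℝ) (hm : 0 ≤ m) (hmM : m < M) :
    ∃ β α : ℝ, 0 < β ∧ 0 < α ∧
      α ∈ Set.Ioo (m * (Real.exp (2 * β) - 1)) (M * (1 - Real.exp (-2 * β))) := by
  have hM : 0 < M := lt_of_le_of_lt hm hmM
  have hMm : 0 < M + m := by linarith
  set r : ℝ := 2 * M / (M + m) with hr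
  have hr1 : 1 < r := by rw [hr, lt_div_iff₀ hMm]; linarith
  have hr0 : 0 < r := by linarith
  have hexp2 : Real.exp (2 * (Real.log r / 2)) = r := by
    rw [show 2 * (Real.log r / 2) = Real.log r by ring, Real.exp_log hr0]
  have hexpm2 : Real.exp (-2 * (Real.log r / 2)) = r⁻¹ := by
    rw [show -2 * (Real.log r / 2) = -Real.log r by ring, Real.exp_neg,
      Real.exp_log hr0]
  have hinv : r⁻¹ = (M + m) / (2 * M) := by rw [hr, inv_div]
  have h1 : M * (1 - r⁻¹) = (M - m) / 2 := by
    rw [hinv]; field_simp; ring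
  have h2 : m * (r - 1) = m * (M - m) / (M + m) := by
    have hrm : r - 1 = (M - m) / (M + m) := by
      rw [hr, div_sub_one hMm.ne']; ring_nf
    rw [hrm, mul_div_assoc]
  have hlh : m * (r - 1) < M * (1 - r⁻¹) := by
    rw [h1, h2, div_lt_div_iff₀ hMm two_pos]
    nlinarith [sq_nonneg (M - m)]
  have hlo0 : 0 ≤ m * (r - 1) := mul_nonneg hm (by linarith)
  refine ⟨Real.log r / 2, (m * (r - 1) + M * (1 - r⁻¹)) / 2, ?_, ?_, ?_, ?_⟩
  · have : 0 < Real.log r := Real.log_pos hr1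
    linarith
  · linarith
  · rw [hexp2]; linarith
  · rw [hexpm2]; linarith

/-- Under the assumption `inf_{y≥y₀} λ⁺ > sup_{y≥y₀} λ⁻` and
`inf_{y≤-y₀} λ⁻ > sup_{y≤-y₀} λ⁺`, there exist `β⁺, β⁻ > 0` and `α⁺, α⁻ > 0`
with `α± ∈ (m±(e^{2β±}-1), M±(1-e^{-2β±}))`, and consequently the Lyapunov
function `V(y,+1) = exp(α⁺y + β⁺)`, `V(y,-1) = exp(α⁺y - β⁺)` on `y ≥ y₀`
satisfies the generator identities and the drift bound `LV < -c⁺ V` for some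
`c⁺ > 0` on `y ≥ y₀` (with unit speed). -/
theorem zigzag_foster_lyapunov
    (lamp lamm : ℝ → ℝ)
    (hcontp : Continuous lamp) (hcontm : Continuous lamm)
    (hnnp : ∀ y, 0 ≤ lamp y) (hnnm : ∀ y, 0 ≤ lamm y)
    (y₀ : ℝ) (hy₀ : 0 < y₀)
    (hba_p : BddAbove (lamm '' Ici y₀)) (hba_m : BddAbove (lamp '' Iic (-y₀)))
    (hplus : sSup (lamm '' Ici y₀) < sInf (lamp '' Ici y₀))
    (hminus : sSup (lamp '' Iic (-y₀)) < sInf (lamm '' Iic (-y₀))) :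
    ∃ βp βm αp αm : ℝ, 0 < βp ∧ 0 < βm ∧ 0 < αp ∧ 0 < αm ∧
      αp ∈ Ioo (sSup (lamm '' Ici y₀) * (Real.exp (2 * βp) - 1))
               (sInf (lamp '' Ici y₀) * (1 - Real.exp (-2 * βp))) ∧
      αm ∈ Ioo (sSup (lamp '' Iic (-y₀)) * (Real.exp (2 * βm) - 1))
               (sInf (lamm '' Iic (-y₀)) * (1 - Real.exp (-2 * βm))) ∧
      ∃ cp : ℝ, 0 < cp ∧ ∀ y : ℝ, y₀ ≤ y →
        (deriv (fun z => Real.exp (αp * z + βp)) y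
            + lamp y * (Real.exp (αp * y - βp) - Real.exp (αp * y + βp))
          = (αp - lamp y * (1 - Real.exp (-2 * βp))) * Real.exp (αp * y + βp)) ∧
        (-(deriv (fun z => Real.exp (αp * z - βp)) y)
            + lamm y * (Real.exp (αp * y + βp) - Real.exp (αp * y - βp))
          = (-αp + lamm y * (Real.exp (2 * βp) - 1)) * Real.exp (αp * y - βp)) ∧
        (αp - lamp y * (1 - Real.exp (-2 * βp))) * Real.exp (αp * y + βp)
          < -cp * Real.exp (αp * y + βp) ∧
        (-αp + lamm y * (Real.exp (2 * βp) - 1)) * Real.exp (αp * y - βp)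
          < -cp * Real.exp (αp * y - βp) := by
  have hmemp : lamm y₀ ∈ lamm '' Ici y₀ := ⟨y₀, self_mem_Ici, rfl⟩
  have hmemm : lamp (-y₀) ∈ lamp '' Iic (-y₀) := ⟨-y₀, self_mem_Iic, rfl⟩
  have hm_nn : 0 ≤ sSup (lamm '' Ici y₀) :=
    (hnnm y₀).trans (le_csSup hba_p hmemp)
  have hm_nn' : 0 ≤ sSup (lamp '' Iic (-y₀)) :=
    (hnnp (-y₀)).trans (le_csSup hba_m hmemm)
  obtain ⟨βp, αp, hβp, hαp, hαpmem⟩ := zigzag_aux _ _ hm_nn hplus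
  obtain ⟨βm, αm, hβm, hαm, hαmmem⟩ := zigzag_aux _ _ hm_nn' hminus
  set lo := sSup (lamm '' Ici y₀) * (Real.exp (2 * βp) - 1) with hlo_def
  set hi := sInf (lamp '' Ici y₀) * (1 - Real.exp (-2 * βp)) with hhi_def
  obtain ⟨hlo_lt, hlt_hi⟩ := hαpmem
  refine ⟨βp, βm, αp, αm, hβp, hβm, hαp, hαm, ⟨hlo_lt, hlt_hi⟩, hαmmem,
    min (hi - αp) (αp - lo) / 2, ?_, ?_⟩
  · have : 0 < min (hi - αp) (αp - lo) := lt_min (by linarith) (by linarith)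
    linarith
  intro y hy
  set cp := min (hi - αp) (αp - lo) / 2 with hcp_def
  have hcp1 : cp < hi - αp := by
    have h := min_le_left (hi - αp) (αp - lo)
    have : 0 < min (hi - αp) (αp - lo) := lt_min (by linarith) (by linarith)
    rw [hcp_def]; linarith
  have hcp2 : cp < αp - lo := by
    have h := min_le_right (hi - αp) (αp - lo)
    have : 0 < min (hi - αp) (αp - lo) := lt_min (by linarith) (by linarith)
    rw [hcp_def]; linarith
  have hMy : sInf (lamp '' Ici y₀) ≤ lamp y :=
    csInf_le ⟨0, by rintro _ ⟨z, _, rfl⟩; exact hnnp z⟩ ⟨y, hy, rfl⟩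
  have hmy : lamm y ≤ sSup (lamm '' Ici y₀) := le_csSup hba_p ⟨y, hy, rfl⟩
  -- derivative computations
  have hd1 : deriv (fun z => Real.exp (αp * z + βp)) y
      = Real.exp (αp * y + βp) * αp := by
    have h1 : HasDerivAt (fun z : ℝ => αp * z + βp) αp y := by
      simpa using ((hasDerivAt_id y).const_mul αp).add_const βp
    exact h1.exp.deriv
  have hd2 : deriv (fun z => Real.exp (αp * z - βp)) y
      = Real.exp (αp * y - βp) * αp := by
    have h1 : HasDerivAt (fun z : ℝ => αp * z - βp) αp y := by
      simpa using ((hasDerivAt_id y).const_mul αp).sub_const βp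
    exact h1.exp.deriv
  have hF : Real.exp (αp * y - βp)
      = Real.exp (-2 * βp) * Real.exp (αp * y + βp) := by
    rw [← Real.exp_add]; congr 1; ring
  have hE : Real.exp (αp * y + βp)
      = Real.exp (2 * βp) * Real.exp (αp * y - βp) := by
    rw [← Real.exp_add]; congr 1; ring
  have hc1 : 0 < 1 - Real.exp (-2 * βp) :=
    sub_pos.mpr (Real.exp_lt_one_iff.mpr (by linarith))
  have hc2 : 0 < Real.exp (2 * βp) - 1 := by
    have h := Real.exp_lt_exp.mpr (show (0:ℝ) < 2 * βp by linarith)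
    simpa using sub_pos.mpr h
  refine ⟨?_, ?_, ?_, ?_⟩
  · rw [hd1, hF]; ring
  · rw [hd2]; nth_rewrite 1 [hE]; ring
  · apply mul_lt_mul_of_pos_right _ (Real.exp_pos _)
    have h1 : hi ≤ lamp y * (1 - Real.exp (-2 * βp)) :=
      mul_le_mul_of_nonneg_right hMy hc1.le
    linarith
  · apply mul_lt_mul_of_pos_right _ (Real.exp_pos _)
    have h1 : lamm y * (Real.exp (2 * βp) - 1) ≤ lo :=
      mul_le_mul_of_nonneg_right hmy hc2.le
    linarith
end
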